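/- Let Q and B be nonempty topological spaces and Γ a subgroup of Homeomorph(Q × B) all of whose elements are of product form; let Ψ := { ψ_g : g ∈ Γ } ⊆ Homeomorph(B), and let Z(Ψ) be the centralizer of Ψ in Homeomorph(B). For each h ∈ Z(Ψ) there is a unique homeomorphism h̄ of (Q × B)/Γ with κ ∘ (id_Q × h) = h̄ ∘ κ, and the assignment h ↦ h̄ is a group homomorphism from Z(Ψ) to Homeomorph((Q × B)/Γ). -/

import Mathlib

namespace Homeomorph

variable {X : Type*} [TopologicalSpace X]

instance instGroup' : Group (X ≃ₜ X) where
  mul f g := g.trans f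
  one := Homeomorph.refl X
  inv := Homeomorph.symm
  mul_assoc _ _ _ := rfl
  one_mul f := ext fun _ => rfl
  mul_one f := ext fun _ => rfl
  inv_mul_cancel f := self_trans_symm f

@[simp] theorem mul_apply' (f g : X ≃ₜ X) (x : X) : (f * g) x = f (g x) := rfl

@[simp] theorem one_apply' (x : X) : (1 : X ≃ₜ X) x = x := rfl

@[simp] theorem inv_def' (f : X ≃ₜ X) : f⁻¹ = f.symm := rfl

/-- The orbit equivalence relation of a subgroup of the homeomorphism group of `X`;
its quotient is the orbit space `X/Γ`, endowed with the quotient topology. -/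
def orbitSetoid (Γ : Subgroup (X ≃ₜ X)) : Setoid X where
  r x y := ∃ γ ∈ Γ, γ x = y
  iseqv := by
    refine ⟨fun x => ⟨1, Γ.one_mem, rfl⟩, ?_, ?_⟩
    · rintro x y ⟨γ, hγ, rfl⟩
      exact ⟨γ⁻¹, Γ.inv_mem hγ, γ.symm_apply_apply x⟩
    · rintro x y z ⟨γ, hγ, rfl⟩ ⟨δ, hδ, rfl⟩
      exact ⟨δ * γ, Γ.mul_mem hδ hγ, rfl⟩

end Homeomorph

section Aux

variable {Q B : Type*} [TopologicalSpace Q] [TopologicalSpace B]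
  (Γ : Subgroup ((Q × B) ≃ₜ (Q × B)))

/-- The set `Ψ` of `B`-components of product-form elements of `Γ`. -/
def PsiSet : Set (B ≃ₜ B) :=
  {ψ : B ≃ₜ B | ∃ g ∈ Γ, ∃ φ : Q ≃ₜ Q, ∀ (z : Q) (y : B), g (z, y) = (φ z, ψ y)}

lemma psi_respects
    (hprod : ∀ g ∈ Γ, ∃ (φ : Q ≃ₜ Q) (ψ : B ≃ₜ B), ∀ (z : Q) (y : B), g (z, y) = (φ z, ψ y))
    (h : B ≃ₜ B) (hc : h ∈ Subgroup.centralizer (PsiSet Γ)) :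
    ∀ p q : Q × B, (Homeomorph.orbitSetoid Γ).r p q →
      (Homeomorph.orbitSetoid Γ).r (p.1, h p.2) (q.1, h q.2) := by
  rintro ⟨z, y⟩ q ⟨γ, hγ, rfl⟩
  obtain ⟨φ, ψ, hφψ⟩ := hprod γ hγ
  have hψ : ψ ∈ PsiSet Γ := ⟨γ, hγ, φ, hφψ⟩
  have hcomm : ψ * h = h * ψ := Subgroup.mem_centralizer_iff.mp hc ψ hψ
  have hcomm' : ψ (h y) = h (ψ y) := by
    have := congrArg (fun (f : B ≃ₜ B) => f y) hcomm
    simpa using this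
  refine ⟨γ, hγ, ?_⟩
  simp [hφψ z y, hφψ z (h y), hcomm']

/-- The descended map on the orbit space. -/
def descFun
    (hprod : ∀ g ∈ Γ, ∃ (φ : Q ≃ₜ Q) (ψ : B ≃ₜ B), ∀ (z : Q) (y : B), g (z, y) = (φ z, ψ y))
    (h : B ≃ₜ B) (hc : h ∈ Subgroup.centralizer (PsiSet Γ)) :
    Quotient (Homeomorph.orbitSetoid Γ) → Quotient (Homeomorph.orbitSetoid Γ) :=
  Quotient.map (fun p => (p.1, h p.2)) (psi_respects Γ hprod h hc)

lemma descFun_mk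
    (hprod : ∀ g ∈ Γ, ∃ (φ : Q ≃ₜ Q) (ψ : B ≃ₜ B), ∀ (z : Q) (y : B), g (z, y) = (φ z, ψ y))
    (h : B ≃ₜ B) (hc : h ∈ Subgroup.centralizer (PsiSet Γ)) (p : Q × B) :
    descFun Γ hprod h hc (Quotient.mk (Homeomorph.orbitSetoid Γ) p) =
      Quotient.mk (Homeomorph.orbitSetoid Γ) (p.1, h p.2) := rfl

lemma descFun_continuous
    (hprod : ∀ g ∈ Γ, ∃ (φ : Q ≃ₜ Q) (ψ : B ≃ₜ B), ∀ (z : Q) (y : B), g (z, y) = (φ z, ψ y))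
    (h : B ≃ₜ B) (hc : h ∈ Subgroup.centralizer (PsiSet Γ)) :
    Continuous (descFun Γ hprod h hc) := by
  apply Continuous.quotient_map'
  exact (continuous_fst).prodMk (h.continuous.comp continuous_snd)

lemma symm_mem_centralizer (h : B ≃ₜ B) (hc : h ∈ Subgroup.centralizer (PsiSet Γ)) :
    h.symm ∈ Subgroup.centralizer (PsiSet Γ) := by
  rw [← Homeomorph.inv_def']; exact Subgroup.inv_mem _ hc

/-- The descended homeomorphism of the orbit space. -/
def descHomeo
    (hprod : ∀ g ∈ Γ, ∃ (φ : Q ≃ₜ Q) (ψ : B ≃ₜ B), ∀ (z : Q) (y : B), g (z, y) = (φ z, ψ y))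
    (h : B ≃ₜ B) (hc : h ∈ Subgroup.centralizer (PsiSet Γ)) :
    Quotient (Homeomorph.orbitSetoid Γ) ≃ₜ Quotient (Homeomorph.orbitSetoid Γ) where
  toFun := descFun Γ hprod h hc
  invFun := descFun Γ hprod h.symm (symm_mem_centralizer Γ h hc)
  left_inv := by
    refine Quotient.ind fun p => ?_
    simp [descFun_mk]
  right_inv := by
    refine Quotient.ind fun p => ?_
    simp [descFun_mk]
  continuous_toFun := descFun_continuous Γ hprod h hc
  continuous_invFun := descFun_continuous Γ hprod h.symm (symm_mem_centralizer Γ h hc)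

lemma descHomeo_mk
    (hprod : ∀ g ∈ Γ, ∃ (φ : Q ≃ₜ Q) (ψ : B ≃ₜ B), ∀ (z : Q) (y : B), g (z, y) = (φ z, ψ y))
    (h : B ≃ₜ B) (hc : h ∈ Subgroup.centralizer (PsiSet Γ)) (p : Q × B) :
    descHomeo Γ hprod h hc (Quotient.mk (Homeomorph.orbitSetoid Γ) p) =
      Quotient.mk (Homeomorph.orbitSetoid Γ) (p.1, h p.2) := by
  exact descFun_mk Γ hprod h hc p

end Aux

/-- Let `Q` and `B` be nonempty topological spaces and `Γ` a subgroup of the homeomorphism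
group of `Q × B` all of whose elements are of product form; let `Ψ := { ψ_g : g ∈ Γ }` and
let `Z(Ψ)` be the centralizer of `Ψ` in the homeomorphism group of `B`. For each
`h ∈ Z(Ψ)` there is a unique homeomorphism `h̄` of `(Q × B)/Γ` with
`κ ∘ (id_Q × h) = h̄ ∘ κ`, and the assignment `h ↦ h̄` is a group homomorphism from
`Z(Ψ)` to the homeomorphism group of `(Q × B)/Γ`. -/
theorem centralizer_to_basic_automorphisms {Q B : Type*} [TopologicalSpace Q]
    [TopologicalSpace B] [Nonempty Q] [Nonempty B] (Γ : Subgroup ((Q × B) ≃ₜ (Q × B)))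
    (hprod : ∀ g ∈ Γ, ∃ (φ : Q ≃ₜ Q) (ψ : B ≃ₜ B), ∀ (z : Q) (y : B), g (z, y) = (φ z, ψ y)) :
    (∀ h ∈ Subgroup.centralizer
        {ψ : B ≃ₜ B | ∃ g ∈ Γ, ∃ φ : Q ≃ₜ Q, ∀ (z : Q) (y : B), g (z, y) = (φ z, ψ y)},
      ∃! hbar : Quotient (Homeomorph.orbitSetoid Γ) ≃ₜ Quotient (Homeomorph.orbitSetoid Γ),
        ∀ p : Q × B, Quotient.mk (Homeomorph.orbitSetoid Γ) (p.1, h p.2) =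
          hbar (Quotient.mk (Homeomorph.orbitSetoid Γ) p)) ∧
    ∃ Θ : ↥(Subgroup.centralizer
          {ψ : B ≃ₜ B | ∃ g ∈ Γ, ∃ φ : Q ≃ₜ Q, ∀ (z : Q) (y : B), g (z, y) = (φ z, ψ y)}) →*
        (Quotient (Homeomorph.orbitSetoid Γ) ≃ₜ Quotient (Homeomorph.orbitSetoid Γ)),
      ∀ (h : ↥(Subgroup.centralizer
          {ψ : B ≃ₜ B | ∃ g ∈ Γ, ∃ φ : Q ≃ₜ Q, ∀ (z : Q) (y : B), g (z, y) = (φ z, ψ y)}))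
        (p : Q × B),
        Quotient.mk (Homeomorph.orbitSetoid Γ) (p.1, (h : B ≃ₜ B) p.2) =
          Θ h (Quotient.mk (Homeomorph.orbitSetoid Γ) p) := by
  constructor
  · intro h hc
    refine ⟨descHomeo Γ hprod h hc, fun p => (descHomeo_mk Γ hprod h hc p).symm, ?_⟩
    intro hbar hspec
    refine Homeomorph.ext (Quotient.ind fun p => ?_)
    exact (hspec p).symm.trans (descHomeo_mk Γ hprod h hc p).symm
  · refine ⟨{ toFun := fun h => descHomeo Γ hprod (h : B ≃ₜ B) h.2
              map_one' := ?_
              map_mul' := ?_ },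
      fun h p => (descHomeo_mk Γ hprod (h : B ≃ₜ B) h.2 p).symm⟩
    · refine Homeomorph.ext (Quotient.ind fun p => ?_)
      simp [descHomeo_mk]
    · intro h₁ h₂
      refine Homeomorph.ext (Quotient.ind fun p => ?_)
      rfl
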